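/- Danskin derivative of the expert summary: assume conditions (N1), (Q1), (Q2), and for (u,v) ∈ [0,C]² not both zero let t*(u,v) denote the unique minimizer of t ↦ ν(u)·G(t)·Φ₀(U(t)) + ν(v)·G(t)·Φ₁(U(t)). Then for every fixed u ∈ (0, C), the map v ↦ F(u, v) is differentiable at every v ∈ (0, C) with derivative (∂F/∂v)(u,v) = ν′(v)·G(t*(u,v))·Φ₁(U(t*(u,v))), and this derivative is strictly positive. -/

import Mathlib

/-- Logistic envelope `Φ₀(u) = log(1 + e^{-u})`. -/
noncomputable def Phi0 (u : ℝ) : ℝ := Real.log (1 + Real.exp (-u))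

/-- Logistic envelope `Φ₁(u) = log(1 + e^{u})`. -/
noncomputable def Phi1 (u : ℝ) : ℝ := Real.log (1 + Real.exp u)

/-- Row objective `t ↦ ν(u)·G(t)·Φ₀(U(t)) + ν(v)·G(t)·Φ₁(U(t))`. -/
noncomputable def rowObj (ν G U : ℝ → ℝ) (u v t : ℝ) : ℝ :=
  ν u * G t * Phi0 (U t) + ν v * G t * Phi1 (U t)

/-- Expert summary `F(u,v) = inf_t rowObj ν G U u v t`. -/
noncomputable def expertSummary (ν G U : ℝ → ℝ) (u v : ℝ) : ℝ :=
  ⨅ t : ℝ, rowObj ν G U u v t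

/-- **Danskin derivative of the expert summary.**
Under (N1), (Q1), (Q2), if `t*(u,v)` denotes the unique minimizer of the row objective
for `(u,v) ∈ [0,C]²` not both zero, then for every fixed `u ∈ (0,C)` the map
`v ↦ F(u,v)` is differentiable at each `v ∈ (0,C)` with derivative
`ν′(v)·G(t*(u,v))·Φ₁(U(t*(u,v)))`, which is strictly positive. -/
theorem danskin_derivative_expert_summary
    (C : ℝ) (hC : 0 < C)
    -- (N1)
    (ν ν' : ℝ → ℝ)
    (hνcont : ContinuousOn ν (Set.Icc 0 C))
    (hνpos : ∀ u ∈ Set.Icc 0 C, 0 < ν u)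
    (hνderiv : ∀ u ∈ Set.Ioo 0 C, HasDerivAt ν (ν' u) u)
    (hν'pos : ∀ u ∈ Set.Ioo 0 C, 0 < ν' u)
    -- (Q1)
    (G U : ℝ → ℝ)
    (hGcont : Continuous G) (hGpos : ∀ t, 0 < G t)
    (hUcont : Continuous U) (hUmono : StrictMono U) (hUsurj : Function.Surjective U)
    -- (Q2)
    (hQ2 : ∀ u ∈ Set.Icc 0 C, ∀ v ∈ Set.Icc 0 C, ¬(u = 0 ∧ v = 0) →
      Filter.Tendsto (fun t => rowObj ν G U u v t) (Filter.cocompact ℝ) Filter.atTop ∧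
      StrictConvexOn ℝ Set.univ (fun t => rowObj ν G U u v t))
    -- `tstar u v` is the unique minimizer of the row objective
    (tstar : ℝ → ℝ → ℝ)
    (htstar : ∀ u ∈ Set.Icc 0 C, ∀ v ∈ Set.Icc 0 C, ¬(u = 0 ∧ v = 0) →
      (∀ s : ℝ, rowObj ν G U u v (tstar u v) ≤ rowObj ν G U u v s) ∧
      (∀ t : ℝ, (∀ s : ℝ, rowObj ν G U u v t ≤ rowObj ν G U u v s) → t = tstar u v)) :
    ∀ u ∈ Set.Ioo (0 : ℝ) C, ∀ v ∈ Set.Ioo (0 : ℝ) C,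
      HasDerivAt (fun v' => expertSummary ν G U u v')
        (ν' v * G (tstar u v) * Phi1 (U (tstar u v))) v ∧
      0 < ν' v * G (tstar u v) * Phi1 (U (tstar u v)) := by
  intro u hu v hv
  obtain ⟨hu0, huC⟩ := hu
  obtain ⟨hv0, hvC⟩ := hv
  have huI : u ∈ Set.Icc (0:ℝ) C := ⟨hu0.le, huC.le⟩
  have hvI : v ∈ Set.Icc (0:ℝ) C := ⟨hv0.le, hvC.le⟩
  have hne : ∀ w : ℝ, ¬(u = 0 ∧ w = 0) := fun w h => absurd h.1 (ne_of_gt hu0)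
  have hPhi1pos : ∀ x : ℝ, 0 < Phi1 x := fun x =>
    Real.log_pos (by have := Real.exp_pos x; linarith)
  have hPhi0nonneg : ∀ x : ℝ, 0 ≤ Phi0 x := fun x =>
    Real.log_nonneg (by have := Real.exp_pos (-x); linarith)
  have hPhi1cont : Continuous Phi1 := by
    unfold Phi1
    exact (continuous_const.add Real.continuous_exp).log
      (fun x => by have := Real.exp_pos x; show 1 + Real.exp x ≠ 0; positivity)
  set b : ℝ → ℝ := fun t => G t * Phi1 (U t) with hbdef
  have hbcont : Continuous b := hGcont.mul (hPhi1cont.comp hUcont)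
  have hrowid : ∀ w s t : ℝ,
      rowObj ν G U u w t = rowObj ν G U u s t + (ν w - ν s) * b t := by
    intro w s t; simp only [rowObj, hbdef]; ring
  have hnn : ∀ w ∈ Set.Icc (0:ℝ) C, ∀ t : ℝ, 0 ≤ rowObj ν G U u w t := by
    intro w hw t
    exact add_nonneg
      (mul_nonneg (mul_nonneg (hνpos u huI).le (hGpos t).le) (hPhi0nonneg (U t)))
      (mul_nonneg (mul_nonneg (hνpos w hw).le (hGpos t).le) (hPhi1pos (U t)).le)
  have hFle : ∀ w ∈ Set.Icc (0:ℝ) C, ∀ s : ℝ,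
      expertSummary ν G U u w ≤ rowObj ν G U u w s := by
    intro w hw s
    exact ciInf_le ⟨0, by rintro x ⟨t, rfl⟩; exact hnn w hw t⟩ s
  have hFeq : ∀ w ∈ Set.Icc (0:ℝ) C,
      expertSummary ν G U u w = rowObj ν G U u w (tstar u w) := by
    intro w hw
    exact le_antisymm (hFle w hw _) (le_ciInf (htstar u huI w hw (hne w)).1)
  set T := tstar u v with hT
  have hmin := (htstar u huI v hvI (hne v)).1
  have huniq := (htstar u huI v hvI (hne v)).2
  have hstrict : ∀ s : ℝ, s ≠ T → rowObj ν G U u v T < rowObj ν G U u v s := by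
    intro s hs
    rcases (hmin s).lt_or_eq with h | h
    · exact h
    · exact absurd (huniq s (fun r => by rw [← h]; exact hmin r)) hs
  -- continuity of the minimizer
  have htcont : Filter.Tendsto (fun w => tstar u w) (nhdsWithin v {v}ᶜ) (nhds T) := by
    rw [Metric.tendsto_nhds]
    intro ε hε
    have hδ1 := hstrict (T - ε) (by intro h; linarith)
    have hδ2 := hstrict (T + ε) (by intro h; linarith)
    set δ : ℝ := min (rowObj ν G U u v (T - ε) - rowObj ν G U u v T)
                     (rowObj ν G U u v (T + ε) - rowObj ν G U u v T) with hδ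
    have hδpos : 0 < δ := lt_min (by linarith) (by linarith)
    set M : ℝ := |b (T - ε) - b T| + |b (T + ε) - b T| + 1 with hM
    have hMpos : 0 < M := by positivity
    have hνct : ContinuousAt ν v := (hνderiv v ⟨hv0, hvC⟩).continuousAt
    have hev1 : ∀ᶠ w in nhds v, |ν w - ν v| < δ / M := by
      have h := Metric.tendsto_nhds.mp hνct.tendsto (δ / M) (by positivity)
      simpa [Real.dist_eq] using h
    have hev2 : ∀ᶠ w in nhds v, w ∈ Set.Ioo (0:ℝ) C :=
      isOpen_Ioo.eventually_mem ⟨hv0, hvC⟩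
    filter_upwards [(hev1.and hev2).filter_mono nhdsWithin_le_nhds] with w hw
    obtain ⟨hwν, hw0, hwC⟩ := hw
    have hwI : w ∈ Set.Icc (0:ℝ) C := ⟨hw0.le, hwC.le⟩
    set T' := tstar u w with hT'
    have hmin' := (htstar u huI w hwI (hne w)).1
    have hcvx := ((hQ2 u huI w hwI (hne w)).2).convexOn
    have habs : ∀ x : ℝ, |x| + 1 ≤ M → |(ν w - ν v) * x| < δ := by
      intro x hx
      calc |(ν w - ν v) * x| = |ν w - ν v| * |x| := abs_mul _ _
        _ ≤ |ν w - ν v| * M := by nlinarith [abs_nonneg (ν w - ν v)]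
        _ < δ / M * M := mul_lt_mul_of_pos_right hwν hMpos
        _ = δ := div_mul_cancel₀ δ hMpos.ne'
    have hA : rowObj ν G U u w T < rowObj ν G U u w (T - ε) := by
      have h1 := habs (b (T - ε) - b T)
        (by rw [hM]; nlinarith [abs_nonneg (b (T + ε) - b T)])
      have h2 := abs_lt.mp h1
      have e1 := hrowid w v T
      have e2 := hrowid w v (T - ε)
      have hd : (ν w - ν v) * b (T - ε) - (ν w - ν v) * b T
          = (ν w - ν v) * (b (T - ε) - b T) := by ring
      have hδle : δ ≤ rowObj ν G U u v (T - ε) - rowObj ν G U u v T := min_le_left _ _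
      linarith
    have hB : rowObj ν G U u w T < rowObj ν G U u w (T + ε) := by
      have h1 := habs (b (T + ε) - b T)
        (by rw [hM]; nlinarith [abs_nonneg (b (T - ε) - b T)])
      have h2 := abs_lt.mp h1
      have e1 := hrowid w v T
      have e2 := hrowid w v (T + ε)
      have hd : (ν w - ν v) * b (T + ε) - (ν w - ν v) * b T
          = (ν w - ν v) * (b (T + ε) - b T) := by ring
      have hδle : δ ≤ rowObj ν G U u v (T + ε) - rowObj ν G U u v T := min_le_right _ _
      linarith
    have hTub : T' < T + ε := by
      by_contra h
      push_neg at h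
      have hseg : T + ε ∈ segment ℝ T T' := by
        rw [segment_eq_Icc (by linarith : T ≤ T')]
        exact ⟨by linarith, h⟩
      have hle := hcvx.le_on_segment (Set.mem_univ T) (Set.mem_univ T') hseg
      have hm : rowObj ν G U u w T' ≤ rowObj ν G U u w T := hmin' T
      have : rowObj ν G U u w (T + ε) ≤ rowObj ν G U u w T :=
        le_trans hle (max_le le_rfl hm)
      linarith
    have hTlb : T - ε < T' := by
      by_contra h
      push_neg at h
      have hseg : T - ε ∈ segment ℝ T' T := by
        rw [segment_eq_Icc (by linarith : T' ≤ T)]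
        exact ⟨h, by linarith⟩
      have hle := hcvx.le_on_segment (Set.mem_univ T') (Set.mem_univ T) hseg
      have hm : rowObj ν G U u w T' ≤ rowObj ν G U u w T := hmin' T
      have : rowObj ν G U u w (T - ε) ≤ rowObj ν G U u w T :=
        le_trans hle (max_le hm le_rfl)
      linarith
    rw [Real.dist_eq]
    exact abs_lt.mpr ⟨by linarith, by linarith⟩
  -- the derivative via the squeeze theorem on slopes
  have hbtend : Filter.Tendsto (fun w => b (tstar u w)) (nhdsWithin v {v}ᶜ)
      (nhds (b T)) := (hbcont.continuousAt).tendsto.comp htcont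
  have hνd := hνderiv v ⟨hv0, hvC⟩
  have hslope : Filter.Tendsto (slope ν v) (nhdsWithin v {v}ᶜ) (nhds (ν' v)) :=
    hasDerivAt_iff_tendsto_slope.mp hνd
  have hL1 : Filter.Tendsto (fun w => slope ν v w * b T) (nhdsWithin v {v}ᶜ)
      (nhds (ν' v * b T)) := hslope.mul tendsto_const_nhds
  have hL2 : Filter.Tendsto (fun w => slope ν v w * b (tstar u w)) (nhdsWithin v {v}ᶜ)
      (nhds (ν' v * b T)) := hslope.mul hbtend
  have hminT := hL1.min hL2
  rw [min_self] at hminT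
  have hmaxT := hL1.max hL2
  rw [max_self] at hmaxT
  have hsand : ∀ᶠ w in nhdsWithin v {v}ᶜ,
      min (slope ν v w * b T) (slope ν v w * b (tstar u w))
        ≤ slope (fun w => expertSummary ν G U u w) v w ∧
      slope (fun w => expertSummary ν G U u w) v w
        ≤ max (slope ν v w * b T) (slope ν v w * b (tstar u w)) := by
    have hev2 : ∀ᶠ w in nhds v, w ∈ Set.Ioo (0:ℝ) C :=
      isOpen_Ioo.eventually_mem ⟨hv0, hvC⟩
    filter_upwards [hev2.filter_mono nhdsWithin_le_nhds, self_mem_nhdsWithin]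
      with w hwIoo hwne
    have hwI : w ∈ Set.Icc (0:ℝ) C := ⟨hwIoo.1.le, hwIoo.2.le⟩
    have hwv : w ≠ v := hwne
    set T' := tstar u w with hT'
    -- sandwich on increments
    have hupper : expertSummary ν G U u w - expertSummary ν G U u v
        ≤ (ν w - ν v) * b T := by
      have h1 := hFle w hwI T
      have h2 := hrowid w v T
      have h3 := hFeq v hvI
      rw [← hT] at h3
      linarith
    have hlower : (ν w - ν v) * b T' ≤
        expertSummary ν G U u w - expertSummary ν G U u v := by
      have h1 := hFle v hvI T'
      have h2 := hrowid w v T'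
      have h3 := hFeq w hwI
      rw [← hT'] at h3
      linarith
    have hsl : slope (fun w => expertSummary ν G U u w) v w
        = (expertSummary ν G U u w - expertSummary ν G U u v) / (w - v) :=
      slope_def_field _ v w
    have hslν : ∀ x : ℝ, (ν w - ν v) * x / (w - v) = slope ν v w * x := by
      intro x; rw [slope_def_field]; ring
    rcases lt_or_gt_of_ne hwv with hlt | hlt
    · -- w < v
      have hneg : w - v < 0 := by linarith
      constructor
      · refine le_trans (min_le_left _ _) ?_
        rw [hsl, ← hslν (b T)]
        exact (div_le_div_right_of_neg hneg).mpr hupper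
      · refine le_trans ?_ (le_max_right _ _)
        rw [hsl, ← hslν (b T')]
        exact (div_le_div_right_of_neg hneg).mpr hlower
    · -- v < w
      have hpos : (0:ℝ) < w - v := by linarith
      constructor
      · refine le_trans (min_le_right _ _) ?_
        rw [hsl, ← hslν (b T')]
        exact (div_le_div_iff_of_pos_right hpos).mpr hlower
      · refine le_trans ?_ (le_max_left _ _)
        rw [hsl, ← hslν (b T)]
        exact (div_le_div_iff_of_pos_right hpos).mpr hupper
  have hkey : HasDerivAt (fun w => expertSummary ν G U u w) (ν' v * b T) v := by
    rw [hasDerivAt_iff_tendsto_slope]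
    exact tendsto_of_tendsto_of_tendsto_of_le_of_le' hminT hmaxT
      (hsand.mono fun w h => h.1) (hsand.mono fun w h => h.2)
  have hBval : ν' v * b T = ν' v * G (tstar u v) * Phi1 (U (tstar u v)) := by
    rw [hbdef, ← hT]; ring
  refine ⟨hBval ▸ hkey, ?_⟩
  exact mul_pos (mul_pos (hν'pos v ⟨hv0, hvC⟩) (hGpos _)) (hPhi1pos _)
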